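/- If A is a symmetric Leibniz algebra over a field of characteristic zero, then the same vector space equipped with the commutator bracket [x,y] = xy - yx and the anticommutator product x∘y = (xy + yx)/2 forms a Poisson algebra: [·,·] is a Lie bracket, ∘ is commutative and associative, and the Leibniz rule [x, y∘z] = [x,y]∘z + y∘[x,z] holds. -/
import Mathlib


/-- A symmetric Leibniz algebra over a field of characteristic zero gives a Poisson
algebra under the commutator `[x,y] = xy - yx` and the anticommutator
`x∘y = (xy + yx)/2`. -/
theorem stmt_8 {k A : Type*} [Field k] [CharZero k] [NonUnitalNonAssocRing A]
    [Module k A] [IsScalarTower k A A] [SMulCommClass k A A]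
    (hL : ∀ x y z : A, x * (y * z) = (x * y) * z + y * (x * z))
    (hR : ∀ x y z : A, (x * y) * z = (x * z) * y + x * (y * z)) :
    -- the commutator is alternating
    (∀ x : A, x * x - x * x = 0) ∧
    -- Jacobi identity for the commutator bracket
    (∀ x y z : A,
      ((x * y - y * x) * z - z * (x * y - y * x))
        + ((y * z - z * y) * x - x * (y * z - z * y))
        + ((z * x - x * z) * y - y * (z * x - x * z)) = 0) ∧
    -- the anticommutator is commutative
    (∀ x y : A, (2⁻¹ : k) • (x * y + y * x) = (2⁻¹ : k) • (y * x + x * y)) ∧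
    -- the anticommutator is associative
    (∀ x y z : A,
      (2⁻¹ : k) • (((2⁻¹ : k) • (x * y + y * x)) * z + z * ((2⁻¹ : k) • (x * y + y * x)))
        = (2⁻¹ : k) • (x * ((2⁻¹ : k) • (y * z + z * y)) + ((2⁻¹ : k) • (y * z + z * y)) * x)) ∧
    -- the Leibniz rule `[x, y∘z] = [x,y]∘z + y∘[x,z]`
    (∀ x y z : A,
      x * ((2⁻¹ : k) • (y * z + z * y)) - ((2⁻¹ : k) • (y * z + z * y)) * x
        = (2⁻¹ : k) • ((x * y - y * x) * z + z * (x * y - y * x))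
          + (2⁻¹ : k) • (y * (x * z - z * x) + (x * z - z * x) * y)) := by
  have key : ∀ a b c : A, c * (a * b) = -((a * b) * c) := by
    intro a b c
    have h2 := hR a c b
    rw [hL a c b] at h2
    linear_combination (norm := abel1) -h2
  have T : ∀ a b c : A, (a * b) * c = (a * c) * b - (b * c) * a := by
    intro a b c
    rw [hR a b c, key b c a]
    abel
  have A2 : ∀ a b c : A, (b * a) * c = -((a * b) * c) := by
    intro a b c
    linear_combination (norm := abel1) T a b c + T b a c
  have A3 : ∀ x y z : A, (x * y) * z + (y * z) * x + (z * x) * y = 0 := by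
    intro x y z
    linear_combination (norm := abel1) T x y z + A2 x z y
  refine ⟨fun x => sub_self _, ?_, ?_, ?_, ?_⟩
  · intro x y z
    simp only [sub_mul, mul_sub, key]
    linear_combination (norm := abel1)
      -(A2 x y z + A2 x y z) - (A2 y z x + A2 y z x) - (A2 z x y + A2 z x y)
        + (A3 x y z + A3 x y z + A3 x y z + A3 x y z)
  · intro x y; rw [add_comm (x * y)]
  · intro x y z
    simp only [smul_mul_assoc, mul_smul_comm, mul_add, add_mul, key, smul_add, smul_neg]
    module
  · intro x y z
    simp only [smul_mul_assoc, mul_smul_comm, mul_add, add_mul, mul_sub, sub_mul, key,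
      smul_add, smul_neg, smul_sub]
    linear_combination (norm := module) -A2 y z x
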